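/- Let D be a real symmetric n×n matrix of negative type. If D is invertible, ⟨D^{-1}1, 1⟩ ≠ 0, α satisfies ⟨α,1⟩ = 0, and ⟨Dα,α⟩ = 0, then α = 0. -/

import Mathlib

open Matrix

/-- For an invertible symmetric matrix `D` of negative type with `⟨D⁻¹ 1, 1⟩ ≠ 0`,
the only vector `α` with `⟨α, 1⟩ = 0` and `⟨D α, α⟩ = 0` is `α = 0`. -/
theorem neg_type_null_vector_eq_zero {n : ℕ} (D : Matrix (Fin n) (Fin n) ℝ)
    (hsymm : D.IsSymm)
    (hneg : ∀ β : Fin n → ℝ, β ⬝ᵥ 1 = 0 → D.mulVec β ⬝ᵥ β ≤ 0)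
    (hunit : IsUnit D) (hip : D⁻¹.mulVec 1 ⬝ᵥ 1 ≠ 0)
    (α : Fin n → ℝ) (h1 : α ⬝ᵥ 1 = 0) (h2 : D.mulVec α ⬝ᵥ α = 0) :
    α = 0 := by
  rcases Nat.eq_zero_or_pos n with hn | hn
  · subst hn; ext i; exact absurd i.isLt (by omega)
  -- Step 1: Dα is orthogonal to every β with β ⬝ᵥ 1 = 0
  have hg : ∀ β : Fin n → ℝ, β ⬝ᵥ 1 = 0 → D.mulVec α ⬝ᵥ β = 0 := by
    intro β hβ
    set g := D.mulVec α ⬝ᵥ β with hgdef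
    set c := D.mulVec β ⬝ᵥ β with hcdef
    have hc : c ≤ 0 := hneg β hβ
    have hsym' : D.mulVec β ⬝ᵥ α = g := by
      rw [hgdef, dotProduct_comm, Matrix.dotProduct_mulVec, dotProduct_comm,
        ← Matrix.mulVec_transpose, hsymm.eq]
      exact dotProduct_comm _ _
    have key : ∀ t : ℝ, 2*t*g + t^2*c ≤ 0 := by
      intro t
      have h0 : (α + t • β) ⬝ᵥ 1 = 0 := by
        simp [add_dotProduct, smul_dotProduct, h1, hβ]
      have hle := hneg _ h0
      have hexp : D.mulVec (α + t • β) ⬝ᵥ (α + t • β) = 2*t*g + t^2*c := by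
        rw [Matrix.mulVec_add, Matrix.mulVec_smul]
        simp only [add_dotProduct, smul_dotProduct, dotProduct_add, dotProduct_smul,
          smul_eq_mul, h2, hsym', hgdef, hcdef]
        ring
      linarith [hexp ▸ hle]
    have h1c : (0:ℝ) < 1 - c := by linarith
    have hne : (1:ℝ) - c ≠ 0 := ne_of_gt h1c
    have ht := key (g/(1-c))
    have hg2 : g^2*(2-c) ≤ 0 := by
      have hcalc : g^2*(2-c) = (1-c)^2 * (2*(g/(1-c))*g + (g/(1-c))^2*c) := by
        field_simp
        ring
      rw [hcalc]
      nlinarith [sq_nonneg (1-c)]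
    have hgsq : g^2 = 0 := by nlinarith [sq_nonneg g]
    exact pow_eq_zero_iff (by norm_num) |>.mp hgsq
  -- Step 2: Dα = c₀ • 1
  set v := D.mulVec α with hv
  have hone : (1 : Fin n → ℝ) ⬝ᵥ 1 = (n : ℝ) := by
    simp [dotProduct]
  have hNne : (n : ℝ) ≠ 0 := Nat.cast_ne_zero.mpr (by omega)
  set c0 := (v ⬝ᵥ 1) / (n : ℝ) with hc0
  set β := v - c0 • 1 with hβdef
  have hβ1 : β ⬝ᵥ 1 = 0 := by
    rw [hβdef, sub_dotProduct, smul_dotProduct, hone, hc0]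
    rw [smul_eq_mul, div_mul_cancel₀ _ hNne, sub_self]
  have hvβ : v ⬝ᵥ β = 0 := hg β hβ1
  have hββ : β ⬝ᵥ β = 0 := by
    rw [hβdef, sub_dotProduct, smul_dotProduct]
    have h1β : (1 : Fin n → ℝ) ⬝ᵥ β = 0 := by rw [dotProduct_comm]; exact hβ1
    have : v ⬝ᵥ (v - c0 • 1) = 0 := by rw [← hβdef]; exact hvβ
    rw [show v - c0 • 1 = β from rfl] at *
    rw [hvβ, h1β]
    simp
  have hβ0 : β = 0 := by
    have := (dotProduct_self_eq_zero (v := β)).mp hββ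
    exact this
  have hveq : v = c0 • 1 := by
    have : v - c0 • 1 = 0 := hβ0
    linear_combination (norm := module) this
  -- Step 3: α = c0 • D⁻¹ 1
  have hdet : IsUnit D.det := (Matrix.isUnit_iff_isUnit_det D).mp hunit
  have hDinv : D⁻¹ * D = 1 := Matrix.nonsing_inv_mul D hdet
  have hα : α = c0 • D⁻¹.mulVec 1 := by
    have : D⁻¹.mulVec (D.mulVec α) = α := by
      rw [Matrix.mulVec_mulVec, hDinv, Matrix.one_mulVec]
    rw [← this, ← hv, hveq, Matrix.mulVec_smul]
  have hc00 : c0 = 0 := by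
    have := h1
    rw [hα, smul_dotProduct, smul_eq_mul] at this
    exact (mul_eq_zero.mp this).resolve_right hip
  rw [hα, hc00, zero_smul]
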